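/- Let d ≥ 1 and let z_1, …, z_n be nonzero vectors in ℝ^d such that ⟪z_i, z_j⟫ < 0 for all i ≠ j, and suppose the collection is maximal in the sense that for every nonzero vector w ∈ ℝ^d there exists an index i with ⟪w, z_i⟫ > 0. Then n = d + 1. (Equivalently: if one chooses points in ℝ^d one at a time, requiring all pairwise dot products to be nonpositive, and no two chosen points are exactly orthogonal, then the process must stop after exactly d + 1 points; the distances of the points from the origin are irrelevant.) -/

import Mathlib

open scoped RealInnerProductSpace
open Finset

/-- Vectors with pairwise negative inner products which all have negative
inner product with some extra vector `u` are linearly independent. -/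
lemma linearIndependent_of_pairwise_neg_inner
    {E : Type*} [NormedAddCommGroup E] [InnerProductSpace ℝ E]
    {m : ℕ} (v : Fin m → E) (u : E)
    (hneg : ∀ i j, i ≠ j → ⟪v i, v j⟫ < 0)
    (hu : ∀ i, ⟪v i, u⟫ < 0) :
    LinearIndependent ℝ v := by
  rw [Fintype.linearIndependent_iff]
  intro g hg
  set s : Finset (Fin m) := univ.filter (fun i => 0 < g i) with hs
  set t : Finset (Fin m) := univ.filter (fun i => g i < 0) with ht
  set P : E := ∑ i ∈ s, g i • v i with hP
  set N : E := ∑ i ∈ t, (-g i) • v i with hN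
  -- P = N
  have hsum : P + ∑ i ∈ univ.filter (fun i => ¬ 0 < g i), g i • v i = 0 := by
    rw [hP, Finset.sum_filter_add_sum_filter_not]; exact hg
  have ht_sub : t ⊆ univ.filter (fun i => ¬ 0 < g i) := by
    intro i hi
    simp only [ht, Finset.mem_filter, Finset.mem_univ, true_and] at hi ⊢
    linarith
  have hrest : ∑ i ∈ univ.filter (fun i => ¬ 0 < g i), g i • v i
      = ∑ i ∈ t, g i • v i := by
    refine (Finset.sum_subset ht_sub ?_).symm
    intro i hi hit
    simp only [ht, Finset.mem_filter, Finset.mem_univ, true_and] at hi hit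
    have : g i = 0 := le_antisymm (not_lt.mp hi) (not_lt.mp hit)
    simp [this]
  have hPN : P = N := by
    have : P + ∑ i ∈ t, g i • v i = 0 := by rw [← hrest]; exact hsum
    rw [hN]
    have : P = -∑ i ∈ t, g i • v i := by linear_combination (norm := abel) this
    rw [this, ← Finset.sum_neg_distrib]
    congr 1; ext i; rw [neg_smul]
  -- ⟪P, N⟫ ≤ 0
  have hPNle : ⟪P, N⟫ ≤ 0 := by
    rw [hP, hN, sum_inner]
    refine Finset.sum_nonpos fun i hi => ?_
    rw [real_inner_smul_left, inner_sum]
    refine mul_nonpos_of_nonneg_of_nonpos ?_ ?_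
    · simp only [hs, Finset.mem_filter] at hi; linarith [hi.2]
    refine Finset.sum_nonpos fun k hk => ?_
    rw [real_inner_smul_right]
    simp only [hs, ht, Finset.mem_filter, Finset.mem_univ, true_and] at hi hk
    have hik : i ≠ k := by rintro rfl; linarith
    have := hneg i k hik
    nlinarith
  have hP0 : P = 0 := by
    rw [← real_inner_self_nonpos]
    calc ⟪P, P⟫ = ⟪P, N⟫ := by rw [hPN]
    _ ≤ 0 := hPNle
  have hN0 : N = 0 := by rw [← hPN]; exact hP0
  -- s is empty
  have hsempty : s = ∅ := by
    by_contra h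
    obtain ⟨i₀, hi₀⟩ := Finset.nonempty_of_ne_empty h
    have h1 : ⟪P, u⟫ = 0 := by rw [hP0, inner_zero_left]
    have h2 : ⟪P, u⟫ < 0 := by
      rw [hP, sum_inner]
      refine Finset.sum_neg (fun i hi => ?_) ⟨i₀, hi₀⟩
      rw [real_inner_smul_left]
      simp only [hs, Finset.mem_filter, Finset.mem_univ, true_and] at hi
      exact mul_neg_of_pos_of_neg hi (hu i)
    linarith
  have htempty : t = ∅ := by
    by_contra h
    obtain ⟨i₀, hi₀⟩ := Finset.nonempty_of_ne_empty h
    have h1 : ⟪N, u⟫ = 0 := by rw [hN0, inner_zero_left]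
    have h2 : ⟪N, u⟫ < 0 := by
      rw [hN, sum_inner]
      refine Finset.sum_neg (fun i hi => ?_) ⟨i₀, hi₀⟩
      rw [real_inner_smul_left]
      simp only [ht, Finset.mem_filter, Finset.mem_univ, true_and] at hi
      exact mul_neg_of_pos_of_neg (by linarith) (hu i)
    linarith
  intro i
  by_contra hgi
  rcases lt_or_gt_of_ne hgi with h | h
  · have : i ∈ t := by simp [ht, h]
    rw [htempty] at this; exact absurd this (Finset.notMem_empty i)
  · have : i ∈ s := by simp [hs, h]
    rw [hsempty] at this; exact absurd this (Finset.notMem_empty i)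

/-- If `z_1, …, z_n` are nonzero vectors in `ℝ^d` with pairwise strictly
negative inner products, and the collection is maximal in the sense that every
nonzero vector has a strictly positive inner product with some `z i`, then
`n = d + 1`. -/
theorem maximal_pairwise_neg_inner_card (d n : ℕ) (hd : 1 ≤ d)
    (z : Fin n → EuclideanSpace ℝ (Fin d))
    (hz : ∀ i, z i ≠ 0)
    (hneg : ∀ i j, i ≠ j → ⟪z i, z j⟫ < 0)
    (hmax : ∀ w : EuclideanSpace ℝ (Fin d), w ≠ 0 → ∃ i, 0 < ⟪w, z i⟫) :
    n = d + 1 := by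
  have hfinrank : Module.finrank ℝ (EuclideanSpace ℝ (Fin d)) = d := by
    simp [finrank_euclideanSpace_fin]
  -- Upper bound: n ≤ d + 1
  have hub : n ≤ d + 1 := by
    by_contra h
    push_neg at h
    have hdn : d + 2 ≤ n := h
    set v : Fin (d + 1) → EuclideanSpace ℝ (Fin d) :=
      fun i => z (Fin.castLE (by omega) i) with hv
    have hli : LinearIndependent ℝ v := by
      refine linearIndependent_of_pairwise_neg_inner v (z ⟨d + 1, by omega⟩)
        (fun i j hij => hneg _ _ ?_) (fun i => hneg _ _ ?_)
      · intro hcon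
        exact hij (Fin.castLE_injective _ hcon)
      · intro hcon
        have : (Fin.castLE (by omega : d + 1 ≤ n) i : Fin n).val = d + 1 :=
          congrArg Fin.val hcon
        simp only [Fin.coe_castLE] at this
        omega
    have := hli.fintype_card_le_finrank
    rw [hfinrank, Fintype.card_fin] at this
    omega
  -- Lower bound: d + 1 ≤ n
  have hlb : d + 1 ≤ n := by
    by_contra h
    push_neg at h
    have hnd : n ≤ d := by omega
    set K : Submodule ℝ (EuclideanSpace ℝ (Fin d)) :=
      Submodule.span ℝ (Set.range z) with hK
    by_cases htop : K = ⊤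
    · -- span is everything: n = d and z is a basis; pick w with ⟪w, z i⟫ = -1
      have hdle : d ≤ n := by
        have h1 := finrank_range_le_card (R := ℝ) z
        rw [Set.finrank, ← hK, htop, finrank_top, hfinrank, Fintype.card_fin] at h1
        exact h1
      have hnd' : n = d := le_antisymm hnd hdle
      have hcard : Fintype.card (Fin n) =
          Module.finrank ℝ (EuclideanSpace ℝ (Fin d)) := by
        rw [Fintype.card_fin, hfinrank, hnd']
      have hle : ⊤ ≤ Submodule.span ℝ (Set.range z) := by rw [← hK, htop]
      set b := basisOfTopLeSpanOfCardEqFinrank z hle hcard with hb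
      have hbz : ⇑b = z := coe_basisOfTopLeSpanOfCardEqFinrank z hle hcard
      set w : EuclideanSpace ℝ (Fin d) :=
        (InnerProductSpace.toDual ℝ (EuclideanSpace ℝ (Fin d))).symm
          (LinearMap.toContinuousLinearMap (-b.sumCoords)) with hw
      have hwz : ∀ i, ⟪w, z i⟫ = -1 := by
        intro i
        rw [hw, InnerProductSpace.toDual_symm_apply]
        have : z i = b i := by rw [hbz]
        rw [this]
        simp [Module.Basis.sumCoords_self_apply]
      have hw0 : w ≠ 0 := by
        intro hcon
        have h0 := hwz ⟨0, by omega⟩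
        rw [hcon, inner_zero_left] at h0
        norm_num at h0
      obtain ⟨i, hi⟩ := hmax w hw0
      rw [hwz i] at hi
      norm_num at hi
    · -- span is proper: pick w in the orthogonal complement
      have hbot : Kᗮ ≠ ⊥ := by
        intro hcon
        exact htop ((Submodule.orthogonal_eq_bot_iff).mp hcon)
      obtain ⟨w, hwK, hw0⟩ := Submodule.exists_mem_ne_zero_of_ne_bot hbot
      obtain ⟨i, hi⟩ := hmax w hw0
      have hzi : z i ∈ K := Submodule.subset_span ⟨i, rfl⟩
      have : ⟪z i, w⟫ = 0 := (Submodule.mem_orthogonal K w).mp hwK (z i) hzi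
      rw [real_inner_comm] at this
      rw [this] at hi
      norm_num at hi
  omega
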